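/- Let 0 < β₁ < β₂ and let a > 0 satisfy F_{β₁,β₂}(a) = 0, and set φ(τ) := (aβ₁ − 1)(e^{aτ} − 1)/a² + τ/a. Then for all u ∈ [0, a(β₁+β₂)], the identity a·φ(β₁+β₂ − u/a) = ((1 + aβ₂)/a)·(e^u − 1)/e^u − u/a holds. -/

import Mathlib

/-- Hamilton football angle function: `F β₁ β₂ x = β₁x − 1 + (β₂x + 1) e^{−x(β₁+β₂)}`. -/
noncomputable def F (β₁ β₂ x : ℝ) : ℝ :=
  β₁ * x - 1 + (β₂ * x + 1) * Real.exp (-x * (β₁ + β₂))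

/-- If `a > 0` satisfies `F_{β₁,β₂}(a) = 0` and `φ(τ) = (aβ₁−1)(e^{aτ}−1)/a² + τ/a`, then
for `u ∈ [0, a(β₁+β₂)]` one has `aφ(β₁+β₂−u/a) = ((1+aβ₂)/a)(eᵘ−1)/eᵘ − u/a`. -/
theorem profile_identity_u (β₁ β₂ a : ℝ) (h₁ : 0 < β₁) (h₂ : β₁ < β₂)
    (ha : 0 < a) (hz : F β₁ β₂ a = 0)
    (φ : ℝ → ℝ)
    (hφ : ∀ τ, φ τ = (a * β₁ - 1) * (Real.exp (a * τ) - 1) / a ^ 2 + τ / a) :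
    ∀ u ∈ Set.Icc (0 : ℝ) (a * (β₁ + β₂)),
      a * φ (β₁ + β₂ - u / a) =
        ((1 + a * β₂) / a) * ((Real.exp u - 1) / Real.exp u) - u / a := by
  intro u hu
  have ha' : a ≠ 0 := ne_of_gt ha
  have hE : Real.exp (a * (β₁ + β₂ - u / a)) = Real.exp (a * (β₁ + β₂)) / Real.exp u := by
    rw [← Real.exp_sub]; congr 1; field_simp
  have hN : Real.exp (-a * (β₁ + β₂)) = 1 / Real.exp (a * (β₁ + β₂)) := by
    rw [show (-a)*(β₁+β₂) = -(a*(β₁+β₂)) by ring, Real.exp_neg, inv_eq_one_div]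
  unfold F at hz
  rw [hN] at hz
  rw [hφ, hE]
  have h1 : Real.exp u ≠ 0 := Real.exp_ne_zero u
  have h2 : Real.exp (a * (β₁ + β₂)) ≠ 0 := Real.exp_ne_zero _
  field_simp at hz ⊢
  linear_combination hz
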